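/- Let V be a nonlocal vertex algebra and u, v ∈ V. Suppose there exists N ∈ ℤ such that (z₁-z₂)^N Y(u,z₁)Y(v,z₂) ∈ Hom(V, V((z₁,z₂))). Then z^N Y(u,z)v ∈ V[[z]], and Y(u_{N-1}v, z) = lim_{z₁→z} (z₁-z)^N Y(u,z₁)Y(v,z), where u_{N-1}v is the (N-1)-th product determined by Y(u,z)v = ∑_n u_n v z^{-n-1}. -/

import Mathlib

noncomputable section

open scoped BigOperators

/-- A coefficientwise model of a nonlocal vertex algebra over `ℂ`:
`Yc n u v` is the coefficient `u_n v` of `z^{-n-1}` in `Y(u,z)v`.  The axioms are: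
the field (truncation) property, the vacuum properties, compatibility (for each `u,v`
there is `k` with `(z₁-z₂)^k Y(u,z₁)Y(v,z₂) ∈ Hom(V,V((z₁,z₂)))`), and weak
associativity `(z₀+z₂)^k Y(u,z₀+z₂)Y(v,z₂)w = (z₀+z₂)^k Y(Y(u,z₀)v,z₂)w`,
all written out on coefficients. -/
structure NLVA (V : Type*) [AddCommGroup V] [Module ℂ V] where
  Yc : ℤ → V →ₗ[ℂ] V →ₗ[ℂ] V
  vac : V
  trunc : ∀ u v : V, ∃ N : ℤ, ∀ n : ℤ, N ≤ n → Yc n u v = 0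
  vac_left : ∀ (v : V) (n : ℤ), Yc n vac v = if n = -1 then v else 0
  vac_right : ∀ (u : V) (n : ℤ), 0 ≤ n → Yc n u vac = 0
  vac_create : ∀ u : V, Yc (-1) u vac = u
  compat : ∀ u v : V, ∃ k : ℕ, ∀ w : V, ∃ N : ℤ, ∀ a b : ℤ, (N ≤ a ∨ N ≤ b) →
    ∑ i ∈ Finset.range (k + 1),
      ((-1 : ℤ) ^ (k - i) * (k.choose i : ℤ)) • Yc (a + i) u (Yc (b + (k : ℤ) - i) v w) = 0
  weak_assoc : ∀ u w : V, ∃ k : ℕ, (∀ n : ℤ, (k : ℤ) ≤ n → Yc n u w = 0) ∧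
    ∀ (v : V) (a b : ℤ),
      ∑ᶠ j : ℕ, (Ring.choose (a + (j : ℤ)) j) •
          Yc ((k : ℤ) - 1 - a - j) u (Yc ((j : ℤ) - b - 1) v w)
        = ∑ i ∈ Finset.range (k + 1),
            ((k.choose i : ℤ)) • Yc ((k : ℤ) - i - 1 - b) (Yc ((i : ℤ) - 1 - a) u v) w

namespace Stmt16Aux

open Finset Polynomial

/-! ### Scalar lemmas about generalized binomial coefficients over `ℤ` -/

lemma rc_reflect (x : ℤ) (s : ℕ) :
    Ring.choose x s = (-1) ^ s * Ring.choose ((s : ℤ) - x - 1) s := by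
  apply nsmul_right_injective (M := ℤ) (Nat.factorial_ne_zero s)
  simp only
  rw [← Ring.descPochhammer_eq_factorial_smul_choose, ← mul_smul_comm,
    ← Ring.descPochhammer_eq_factorial_smul_choose]
  rw [Polynomial.descPochhammer_smeval_eq_ascPochhammer x s]
  have := Polynomial.ascPochhammer_smeval_neg_eq_descPochhammer ((s:ℤ) - x - 1) s
  have hneg : -((s:ℤ) - x - 1) = x - s + 1 := by ring
  rw [hneg] at this
  rw [this]
  rw [Units.smul_def, Int.coe_negOnePow_natCast, smul_eq_mul]

lemma rc_vdm (x y : ℤ) (s : ℕ) :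
    ∑ p ∈ Finset.range (s+1), Ring.choose x p * Ring.choose y (s-p) = Ring.choose (x+y) s := by
  rw [Ring.add_choose_eq s (Commute.all x y), Finset.Nat.sum_antidiagonal_eq_sum_range_succ_mk]

lemma rc_nonneg_lt (x : ℤ) (s : ℕ) (h0 : 0 ≤ x) (h : x < (s:ℤ)) : Ring.choose x s = 0 := by
  lift x to ℕ using h0
  rw [Ring.choose_natCast]
  rw [Nat.cast_eq_zero, Nat.choose_eq_zero_iff]
  exact_mod_cast h

lemma rc_diag (s : ℕ) : Ring.choose ((s:ℤ)) s = 1 := by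
  rw [Ring.choose_natCast]; simp

lemma rc_S1 (α N : ℤ) (j : ℕ) :
    ∑ p ∈ Finset.range (j+1), Ring.choose (α + (p:ℤ)) p * ((-1:ℤ)^(j-p) * Ring.choose N (j-p))
      = Ring.choose (α - N + j) j := by
  have key : ∀ p ∈ Finset.range (j+1),
      Ring.choose (α + (p:ℤ)) p * ((-1:ℤ)^(j-p) * Ring.choose N (j-p))
        = (-1:ℤ)^j * (Ring.choose (-α-1) p * Ring.choose N (j-p)) := by
    intro p hp
    rw [Finset.mem_range] at hp
    have hple : p ≤ j := Nat.lt_succ_iff.mp hp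
    have h1 : Ring.choose (α + (p:ℤ)) p = (-1)^p * Ring.choose (-α-1) p := by
      rw [rc_reflect (α + p) p]
      congr 1
      ring_nf
    rw [h1]
    have : (-1:ℤ)^p * Ring.choose (-α-1) p * ((-1:ℤ)^(j-p) * Ring.choose N (j-p))
        = ((-1:ℤ)^p * (-1:ℤ)^(j-p)) * (Ring.choose (-α-1) p * Ring.choose N (j-p)) := by ring
    rw [this, ← pow_add, Nat.add_sub_cancel' hple]
  rw [Finset.sum_congr rfl key, ← Finset.mul_sum, rc_vdm (-α-1) N j]
  rw [rc_reflect (-α-1+N) j]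
  have h2 : (j:ℤ) - (-α-1+N) - 1 = α - N + j := by ring
  rw [h2, ← mul_assoc, ← pow_add, ← two_mul, pow_mul]
  norm_num

/-! ### A regrouping lemma for double sums -/

lemma regroup {V : Type*} [AddCommGroup V] (e : ℕ → ℕ → ℤ) (g : ℕ → V) (n : ℕ)
    (hg : ∀ s, n ≤ s → g s = 0) :
    ∑ s ∈ range n, ∑ i ∈ range n, e s i • g (s + i)
      = ∑ j ∈ range n, (∑ p ∈ range (j + 1), e p (j - p)) • g j := by
  have hL : ∑ s ∈ range n, ∑ i ∈ range n, e s i • g (s + i)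
      = ∑ x ∈ (range n ×ˢ range n).filter (fun x => x.1 + x.2 < n),
          e x.1 x.2 • g (x.1 + x.2) := by
    rw [← Finset.sum_product']
    refine (Finset.sum_filter_of_ne ?_).symm
    intro x _ hx
    by_contra hc
    push_neg at hc
    exact hx (by rw [hg _ hc, smul_zero])
  have hR : ∑ j ∈ range n, (∑ p ∈ range (j + 1), e p (j - p)) • g j
      = ∑ x ∈ (range n).sigma (fun j => range (j + 1)), e x.2 (x.1 - x.2) • g x.1 := by
    rw [Finset.sum_sigma]
    exact Finset.sum_congr rfl fun j _ => by rw [Finset.sum_smul]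
  rw [hL, hR]
  refine Finset.sum_nbij' (fun x => ⟨x.1 + x.2, x.1⟩) (fun y => (y.2, y.1 - y.2)) ?_ ?_ ?_ ?_ ?_
  · intro x hx
    simp only [Finset.mem_filter, Finset.mem_product, Finset.mem_range] at hx
    simp only [Finset.mem_sigma, Finset.mem_range]
    exact ⟨hx.2, Nat.lt_succ_of_le (Nat.le_add_right _ _)⟩
  · intro y hy
    simp only [Finset.mem_sigma, Finset.mem_range] at hy
    simp only [Finset.mem_filter, Finset.mem_product, Finset.mem_range]
    have h2 := Nat.lt_succ_iff.mp hy.2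
    exact ⟨⟨lt_of_le_of_lt h2 hy.1, lt_of_le_of_lt (Nat.sub_le _ _) hy.1⟩, by omega⟩
  · intro x hx; simp
  · intro y hy
    simp only [Finset.mem_sigma, Finset.mem_range] at hy
    have h2 := Nat.lt_succ_iff.mp hy.2
    ext
    · simp [Nat.add_sub_cancel' h2]
    · simp
  · intro x hx; simp

/-! ### Main development -/

variable {V : Type*} [AddCommGroup V] [Module ℂ V]

/-- The coefficients of `(z₁-z₂)^N Y(u,z₁)Y(v,z₂)w`. -/
def Fc (A : NLVA V) (u v : V) (N : ℤ) (w : V) (a b : ℤ) : V :=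
  ∑ᶠ i : ℕ, ((-1 : ℤ) ^ i * Ring.choose N i) • A.Yc (N - i + a) u (A.Yc (b + i) v w)

lemma Fc_eq_sum (A : NLVA V) (u v : V) (N : ℤ) (w : V) {T : ℤ}
    (hT : ∀ q, T ≤ q → A.Yc q v w = 0) (a b : ℤ) (n : ℕ) (hn : T - b ≤ (n:ℤ)) :
    Fc A u v N w a b
      = ∑ i ∈ range n, ((-1 : ℤ) ^ i * Ring.choose N i) •
          A.Yc (N - i + a) u (A.Yc (b + i) v w) := by
  apply finsum_eq_finset_sum_of_support_subset
  intro i hi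
  simp only [Function.mem_support] at hi
  simp only [Finset.coe_range, Set.mem_Iio]
  by_contra hc
  push_neg at hc
  apply hi
  have hni : (n:ℤ) ≤ (i:ℤ) := by exact_mod_cast hc
  rw [hT (b + i) (by omega), map_zero, smul_zero]

lemma Fc_zero_of_trunc (A : NLVA V) (u v : V) (N : ℤ) (w : V) {T : ℤ}
    (hT : ∀ q, T ≤ q → A.Yc q v w = 0) (a b : ℤ) (hb : T ≤ b) :
    Fc A u v N w a b = 0 := by
  apply finsum_eq_zero_of_forall_eq_zero
  intro i
  rw [hT (b + i) (by omega), map_zero, smul_zero]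

/-- Weak associativity at level `k`. -/
def WAk (A : NLVA V) (u v w : V) (k : ℕ) : Prop :=
  ∀ a b : ℤ,
    ∑ᶠ j : ℕ, (Ring.choose (a + (j : ℤ)) j) •
        A.Yc ((k : ℤ) - 1 - a - j) u (A.Yc ((j : ℤ) - b - 1) v w)
      = ∑ i ∈ Finset.range (k + 1),
          ((k.choose i : ℤ)) • A.Yc ((k : ℤ) - i - 1 - b) (A.Yc ((i : ℤ) - 1 - a) u v) w

lemma lhs_eq_sum (A : NLVA V) (u v w : V) {T : ℤ} (hT : ∀ q, T ≤ q → A.Yc q v w = 0)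
    (k : ℕ) (a b : ℤ) (n : ℕ) (hn : T + b + 1 ≤ (n:ℤ)) :
    (∑ᶠ j : ℕ, (Ring.choose (a + (j : ℤ)) j) •
        A.Yc ((k : ℤ) - 1 - a - j) u (A.Yc ((j : ℤ) - b - 1) v w))
      = ∑ j ∈ range n, (Ring.choose (a + (j : ℤ)) j) •
          A.Yc ((k : ℤ) - 1 - a - j) u (A.Yc ((j : ℤ) - b - 1) v w) := by
  apply finsum_eq_finset_sum_of_support_subset
  intro j hj
  simp only [Function.mem_support] at hj
  simp only [Finset.coe_range, Set.mem_Iio]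
  by_contra hc
  push_neg at hc
  apply hj
  have hnj : (n:ℤ) ≤ (j:ℤ) := by exact_mod_cast hc
  rw [hT ((j:ℤ) - b - 1) (by omega), map_zero, smul_zero]

lemma wa_pad (A : NLVA V) (u v w : V) {T : ℤ} (hT : ∀ q, T ≤ q → A.Yc q v w = 0)
    (k : ℕ) (h : WAk A u v w k) : WAk A u v w (k+1) := by
  intro a b
  set n₀ := (T + b + 1).toNat with hn0
  have hT1 : T + b + 1 ≤ (n₀:ℤ) := Int.self_le_toNat _
  rw [lhs_eq_sum A u v w hT (k+1) a b (n₀+1) (by push_cast; omega)]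
  have e1 := h (a-1) b
  have e2 := h a (b-1)
  rw [lhs_eq_sum A u v w hT k (a-1) b (n₀+1) (by push_cast; omega)] at e1
  rw [lhs_eq_sum A u v w hT k a (b-1) n₀ (by push_cast; omega)] at e2
  have claimA : ∑ j ∈ range (n₀+1), (Ring.choose (a + (j:ℤ)) j) •
        A.Yc (((k+1:ℕ):ℤ) - 1 - a - j) u (A.Yc ((j:ℤ) - b - 1) v w)
      = (∑ j ∈ range (n₀+1), (Ring.choose ((a-1) + (j:ℤ)) j) •
          A.Yc ((k:ℤ) - 1 - (a-1) - j) u (A.Yc ((j:ℤ) - b - 1) v w))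
        + ∑ j ∈ range n₀, (Ring.choose (a + (j:ℤ)) j) •
            A.Yc ((k:ℤ) - 1 - a - j) u (A.Yc ((j:ℤ) - (b-1) - 1) v w) := by
    rw [Finset.sum_range_succ' (fun j => (Ring.choose (a + (j:ℤ)) j) •
        A.Yc (((k+1:ℕ):ℤ) - 1 - a - j) u (A.Yc ((j:ℤ) - b - 1) v w)) n₀]
    rw [Finset.sum_range_succ' (fun j => (Ring.choose ((a-1) + (j:ℤ)) j) •
        A.Yc ((k:ℤ) - 1 - (a-1) - j) u (A.Yc ((j:ℤ) - b - 1) v w)) n₀]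
    have h0 : (Ring.choose (a + ((0:ℕ):ℤ)) 0) •
          A.Yc (((k+1:ℕ):ℤ) - 1 - a - ((0:ℕ):ℤ)) u (A.Yc (((0:ℕ):ℤ) - b - 1) v w)
        = (Ring.choose ((a-1) + ((0:ℕ):ℤ)) 0) •
          A.Yc ((k:ℤ) - 1 - (a-1) - ((0:ℕ):ℤ)) u (A.Yc (((0:ℕ):ℤ) - b - 1) v w) := by
      rw [Ring.choose_zero_right, Ring.choose_zero_right]
      congr 2
      push_cast; ring
    rw [h0]
    have hmain : ∑ j ∈ range n₀, (Ring.choose (a + ((j+1:ℕ):ℤ)) (j+1)) •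
          A.Yc (((k+1:ℕ):ℤ) - 1 - a - ((j+1:ℕ):ℤ)) u (A.Yc (((j+1:ℕ):ℤ) - b - 1) v w)
        = (∑ j ∈ range n₀, (Ring.choose ((a-1) + ((j+1:ℕ):ℤ)) (j+1)) •
            A.Yc ((k:ℤ) - 1 - (a-1) - ((j+1:ℕ):ℤ)) u (A.Yc (((j+1:ℕ):ℤ) - b - 1) v w))
          + ∑ j ∈ range n₀, (Ring.choose (a + (j:ℤ)) j) •
              A.Yc ((k:ℤ) - 1 - a - j) u (A.Yc ((j:ℤ) - (b-1) - 1) v w) := by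
      rw [← Finset.sum_add_distrib]
      refine Finset.sum_congr rfl fun j _ => ?_
      have hx1 : (((k+1:ℕ)):ℤ) - 1 - a - (((j+1:ℕ)):ℤ) = (k:ℤ) - 1 - a - j := by push_cast; ring
      have hx2 : (((j+1:ℕ)):ℤ) - b - 1 = (j:ℤ) - (b-1) - 1 := by push_cast; ring
      have hx3 : (k:ℤ) - 1 - (a-1) - (((j+1:ℕ)):ℤ) = (k:ℤ) - 1 - a - j := by push_cast; ring
      have hc1 : a + (((j+1:ℕ)):ℤ) = (a + (j:ℤ)) + 1 := by push_cast; ring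
      have hc2 : (a-1) + (((j+1:ℕ)):ℤ) = a + (j:ℤ) := by push_cast; ring
      rw [hx1, hx3, hc1, hc2, Ring.choose_succ_succ, add_smul]
      rw [add_comm]
      congr 2
      rw [hx2]
    rw [hmain]
    abel
  rw [claimA, e1, e2]
  have hsplit : ∀ i ∈ range (k+1),
      (((k+1).choose (i+1) : ℤ)) • A.Yc (((k+1:ℕ):ℤ) - ((i+1:ℕ):ℤ) - 1 - b)
          (A.Yc (((i+1:ℕ):ℤ) - 1 - a) u v) w
        = ((k.choose i : ℤ)) • A.Yc ((k:ℤ) - i - 1 - b) (A.Yc ((i:ℤ) - 1 - (a-1)) u v) w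
          + ((k.choose (i+1) : ℤ)) • A.Yc ((k:ℤ) - ((i+1:ℕ):ℤ) - 1 - (b-1)) (A.Yc (((i+1:ℕ):ℤ) - 1 - a) u v) w := by
    intro i _
    have hy1 : (((k+1:ℕ)):ℤ) - (((i+1:ℕ)):ℤ) - 1 - b = (k:ℤ) - i - 1 - b := by push_cast; ring
    have hy2 : (((i+1:ℕ)):ℤ) - 1 - a = (i:ℤ) - 1 - (a-1) := by push_cast; ring
    have hy3 : (k:ℤ) - ((i+1:ℕ):ℤ) - 1 - (b-1) = (k:ℤ) - i - 1 - b := by push_cast; ring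
    rw [hy1, hy2, hy3, Nat.choose_succ_succ, Nat.cast_add, add_smul]
  have claimB : ∑ i ∈ Finset.range ((k+1)+1), (((k+1).choose i : ℤ)) •
        A.Yc (((k+1:ℕ):ℤ) - i - 1 - b) (A.Yc ((i:ℤ) - 1 - a) u v) w
      = (∑ i ∈ range (k+1), ((k.choose i : ℤ)) •
          A.Yc ((k:ℤ) - i - 1 - b) (A.Yc ((i:ℤ) - 1 - (a-1)) u v) w)
        + ∑ i ∈ range (k+1), ((k.choose i : ℤ)) •
            A.Yc ((k:ℤ) - i - 1 - (b-1)) (A.Yc ((i:ℤ) - 1 - a) u v) w := by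
    rw [Finset.sum_range_succ' (fun i => (((k+1).choose i : ℤ)) •
        A.Yc (((k+1:ℕ):ℤ) - i - 1 - b) (A.Yc ((i:ℤ) - 1 - a) u v) w) (k+1)]
    rw [Finset.sum_congr rfl hsplit, Finset.sum_add_distrib, add_assoc]
    congr 1
    rw [Finset.sum_range_succ (fun i => ((k.choose (i+1) : ℤ)) •
        A.Yc ((k:ℤ) - ((i+1:ℕ):ℤ) - 1 - (b-1)) (A.Yc (((i+1:ℕ):ℤ) - 1 - a) u v) w) k]
    rw [Finset.sum_range_succ' (fun i => ((k.choose i : ℤ)) •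
        A.Yc ((k:ℤ) - (i:ℤ) - 1 - (b-1)) (A.Yc ((i:ℤ) - 1 - a) u v) w) k]
    have h1 : ((k.choose (k+1) : ℤ)) •
        A.Yc ((k:ℤ) - ((k+1:ℕ):ℤ) - 1 - (b-1)) (A.Yc (((k+1:ℕ):ℤ) - 1 - a) u v) w = 0 := by
      rw [Nat.choose_succ_self, Nat.cast_zero, zero_smul]
    have h2 : (((k+1).choose 0 : ℤ)) •
          A.Yc (((k+1:ℕ):ℤ) - ((0:ℕ):ℤ) - 1 - b) (A.Yc (((0:ℕ):ℤ) - 1 - a) u v) w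
        = ((k.choose 0 : ℤ)) •
          A.Yc ((k:ℤ) - ((0:ℕ):ℤ) - 1 - (b-1)) (A.Yc (((0:ℕ):ℤ) - 1 - a) u v) w := by
      rw [Nat.choose_zero_right, Nat.choose_zero_right]
      congr 2
      push_cast; ring
    rw [h1, add_zero, h2]
  exact claimB.symm

lemma master (A : NLVA V) (u v : V) (N : ℤ)
    (H : ∀ w : V, ∃ M : ℤ, ∀ a b : ℤ, (M ≤ a ∨ M ≤ b) → Fc A u v N w a b = 0) (w : V) :
    ∃ k : ℕ,
      (∀ α β : ℤ, α < 0 →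
        ∑ i ∈ Finset.range (k+1), ((k.choose i : ℤ)) •
          A.Yc ((k:ℤ) - i - 1 - β) (A.Yc (N + i - 1 - α) u v) w = 0) ∧
      (∀ β : ℤ,
        ∑ i ∈ Finset.range (k+1), ((k.choose i : ℤ)) •
          A.Yc ((k:ℤ) - i - 1 - β) (A.Yc (N + i - 1) u v) w
        = ∑ᶠ a : ℤ, Fc A u v N w a ((k:ℤ) - a - β - 2)) := by
  obtain ⟨T, hT⟩ := A.trunc v w
  obtain ⟨M, hH⟩ := H w
  obtain ⟨k₀, hk₀, hWA₀⟩ := A.weak_assoc u w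
  have hWAlvl : ∀ d : ℕ, WAk A u v w (k₀ + d) := by
    intro d
    induction d with
    | zero => exact hWA₀ v
    | succ d ih => exact wa_pad A u v w hT (k₀ + d) ih
  have hWA : WAk A u v w (k₀ + M.toNat) := hWAlvl M.toNat
  set k := k₀ + M.toNat with hkdef
  have hMk : M ≤ (k:ℤ) := by
    have h1 := Int.self_le_toNat M
    have h2 : (M.toNat:ℤ) ≤ ((k₀ + M.toNat : ℕ):ℤ) := by exact_mod_cast Nat.le_add_left _ _
    omega
  have core : ∀ α β : ℤ,
      ∑ i ∈ Finset.range (k+1), ((k.choose i : ℤ)) •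
          A.Yc ((k:ℤ) - i - 1 - β) (A.Yc (N + i - 1 - α) u v) w
        = ∑ s ∈ Finset.range ((T + β + 1).toNat),
            Ring.choose (α + (s:ℤ)) s • Fc A u v N w ((k:ℤ) - α - 1 - s) ((s:ℤ) - β - 1) := by
    intro α β
    have hnT : T + β + 1 ≤ ((T + β + 1).toNat : ℤ) := Int.self_le_toNat _
    set n := (T + β + 1).toNat with hn
    have h0 : ∑ i ∈ Finset.range (k+1), ((k.choose i : ℤ)) •
          A.Yc ((k:ℤ) - i - 1 - β) (A.Yc (N + i - 1 - α) u v) w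
        = ∑ i ∈ Finset.range (k+1), ((k.choose i : ℤ)) •
          A.Yc ((k:ℤ) - i - 1 - β) (A.Yc ((i:ℤ) - 1 - (α - N)) u v) w := by
      refine Finset.sum_congr rfl fun i _ => ?_
      rw [show N + (i:ℤ) - 1 - α = (i:ℤ) - 1 - (α - N) from by ring]
    rw [h0, ← hWA (α - N) β]
    rw [lhs_eq_sum A u v w hT k (α - N) β n hnT]
    have hFc : ∀ s ∈ Finset.range n,
        Ring.choose (α + (s:ℤ)) s • Fc A u v N w ((k:ℤ) - α - 1 - s) ((s:ℤ) - β - 1)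
          = ∑ i ∈ Finset.range n,
              (Ring.choose (α + (s:ℤ)) s * ((-1:ℤ)^i * Ring.choose N i)) •
                A.Yc ((k:ℤ) - 1 - (α - N) - ((s + i : ℕ):ℤ)) u
                  (A.Yc (((s + i : ℕ):ℤ) - β - 1) v w) := by
      intro s hs
      rw [Finset.mem_range] at hs
      have hs' : (s:ℤ) < (n:ℤ) := by exact_mod_cast hs
      rw [Fc_eq_sum A u v N w hT ((k:ℤ) - α - 1 - s) ((s:ℤ) - β - 1) n (by omega)]
      rw [Finset.smul_sum]
      refine Finset.sum_congr rfl fun i _ => ?_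
      rw [smul_smul]
      rw [show N - (i:ℤ) + ((k:ℤ) - α - 1 - s) = (k:ℤ) - 1 - (α - N) - ((s + i:ℕ):ℤ) from by
          push_cast; ring,
        show ((s:ℤ) - β - 1) + i = ((s + i:ℕ):ℤ) - β - 1 from by push_cast; ring]
    rw [Finset.sum_congr rfl hFc]
    rw [regroup (fun s i => Ring.choose (α + (s:ℤ)) s * ((-1:ℤ)^i * Ring.choose N i))
        (fun j => A.Yc ((k:ℤ) - 1 - (α - N) - (j:ℤ)) u (A.Yc ((j:ℤ) - β - 1) v w)) n
        (fun s hs => by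
          have hns : (n:ℤ) ≤ (s:ℤ) := by exact_mod_cast hs
          show ((A.Yc ((k:ℤ) - 1 - (α - N) - (s:ℤ))) u) (((A.Yc ((s:ℤ) - β - 1)) v) w) = 0
          rw [hT ((s:ℤ) - β - 1) (by omega), map_zero])]
    refine Finset.sum_congr rfl fun j _ => ?_
    congr 1
    exact (rc_S1 α N j).symm
  refine ⟨k, ?_, ?_⟩
  · -- the α < 0 statement
    intro α β hα
    rw [core α β]
    refine Finset.sum_eq_zero fun s hs => ?_
    by_cases hM' : M ≤ (k:ℤ) - α - 1 - s
    · rw [hH _ _ (Or.inl hM'), smul_zero]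
    · push_neg at hM'
      have h0 : 0 ≤ α + (s:ℤ) := by omega
      have h1 : α + (s:ℤ) < (s:ℤ) := by omega
      rw [rc_nonneg_lt _ s h0 h1, zero_smul]
  · -- the α = 0 statement
    intro β
    have hcore := core 0 β
    simp only [sub_zero, zero_add] at hcore
    rw [hcore]
    have hnT : T + β + 1 ≤ ((T + β + 1).toNat : ℤ) := Int.self_le_toNat _
    set n := (T + β + 1).toNat with hn
    have hsum : ∑ s ∈ Finset.range n,
          Ring.choose ((s:ℤ)) s • Fc A u v N w ((k:ℤ) - 1 - s) ((s:ℤ) - β - 1)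
        = ∑ s ∈ Finset.range n, Fc A u v N w ((k:ℤ) - 1 - s) ((s:ℤ) - β - 1) :=
      Finset.sum_congr rfl fun s _ => by rw [rc_diag, one_smul]
    rw [hsum]
    have hsupp : (Function.support fun a : ℤ => Fc A u v N w a ((k:ℤ) - a - β - 2))
        ⊆ ↑(Finset.Icc ((k:ℤ) - n) ((k:ℤ) - 1)) := by
      intro a ha
      simp only [Function.mem_support] at ha
      simp only [Finset.coe_Icc, Set.mem_Icc]
      constructor
      · by_contra hc
        push_neg at hc
        exact ha (Fc_zero_of_trunc A u v N w hT _ _ (by omega))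
      · by_contra hc
        push_neg at hc
        exact ha (hH _ _ (Or.inl (by omega)))
    rw [finsum_eq_finset_sum_of_support_subset _ hsupp]
    refine Finset.sum_nbij' (fun s => (k:ℤ) - 1 - s) (fun a => ((k:ℤ) - 1 - a).toNat)
      ?_ ?_ ?_ ?_ ?_
    · intro s hs
      rw [Finset.mem_range] at hs
      have hs' : (s:ℤ) < (n:ℤ) := by exact_mod_cast hs
      rw [Finset.mem_Icc]
      omega
    · intro a ha
      rw [Finset.mem_Icc] at ha
      rw [Finset.mem_range]
      omega
    · intro s hs
      rw [Finset.mem_range] at hs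
      omega
    · intro a ha
      rw [Finset.mem_Icc] at ha
      omega
    · intro s hs
      congr 1
      ring

end Stmt16Aux

/-- Let `V` be a nonlocal vertex algebra and `u, v ∈ V`.  Suppose there is `N ∈ ℤ` with
`(z₁-z₂)^N Y(u,z₁)Y(v,z₂) ∈ Hom(V, V((z₁,z₂)))` (here `(z₁-z₂)^N` is expanded in the
domain `|z₁|>|z₂|`, with coefficients the generalized binomial coefficients).  Then
`z^N Y(u,z)v ∈ V[[z]]` (i.e. `u_n v = 0` for `n ≥ N`), and
`Y(u_{N-1}v, z) = lim_{z₁→z} (z₁-z)^N Y(u,z₁)Y(v,z)`, coefficientwise. -/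
theorem stmt16 {V : Type*} [AddCommGroup V] [Module ℂ V] (A : NLVA V) (u v : V) (N : ℤ)
    (H : ∀ w : V, ∃ M : ℤ, ∀ a b : ℤ, (M ≤ a ∨ M ≤ b) →
      ∑ᶠ i : ℕ, ((-1 : ℤ) ^ i * Ring.choose N i) • A.Yc (N - i + a) u (A.Yc (b + i) v w) = 0) :
    (∀ n : ℤ, N ≤ n → A.Yc n u v = 0) ∧
    (∀ (w : V) (c : ℤ),
      A.Yc c (A.Yc (N - 1) u v) w
        = ∑ᶠ a : ℤ, ∑ᶠ i : ℕ,
            ((-1 : ℤ) ^ i * Ring.choose N i) • A.Yc (N - i + a) u (A.Yc ((c - 1 - a) + i) v w)) := by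
  have H' : ∀ w : V, ∃ M : ℤ, ∀ a b : ℤ, (M ≤ a ∨ M ≤ b) → Stmt16Aux.Fc A u v N w a b = 0 := H
  have part1 : ∀ n : ℤ, N ≤ n → A.Yc n u v = 0 := by
    obtain ⟨S, hS⟩ := A.trunc u v
    have key : ∀ d : ℕ, ∀ n : ℤ, N ≤ n → S ≤ n + d → A.Yc n u v = 0 := by
      intro d
      induction d with
      | zero =>
        intro n hn hd
        exact hS n (by push_cast at hd; omega)
      | succ d ih =>
        intro n hn hd
        by_cases hcase : S ≤ n + d
        · exact ih n hn hcase
        · push_neg at hcase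
          obtain ⟨k, hk1, _⟩ := Stmt16Aux.master A u v N H' A.vac
          have h := hk1 (N - 1 - n) (k : ℤ) (by omega)
          have hz : ∀ i ∈ Finset.range (k+1), i ≠ 0 →
              ((k.choose i : ℤ)) • A.Yc ((k:ℤ) - i - 1 - (k:ℤ))
                (A.Yc (N + i - 1 - (N - 1 - n)) u v) A.vac = 0 := by
            intro i _ hi0
            have hi1 : 1 ≤ (i:ℤ) := by exact_mod_cast Nat.one_le_iff_ne_zero.mpr hi0
            rw [show N + (i:ℤ) - 1 - (N - 1 - n) = n + i from by ring]
            rw [ih (n + i) (by omega) (by push_cast at hd ⊢; omega), map_zero,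
              LinearMap.zero_apply, smul_zero]
          rw [Finset.sum_eq_single_of_mem 0 (Finset.mem_range.mpr k.succ_pos) hz] at h
          rw [Nat.choose_zero_right, Nat.cast_one, one_smul, Nat.cast_zero] at h
          rw [show (k:ℤ) - 0 - 1 - (k:ℤ) = -1 from by ring,
            show N + 0 - 1 - (N - 1 - n) = n from by ring] at h
          rw [A.vac_create] at h
          exact h
    intro n hn
    exact key (S - n).toNat n hn (by omega)
  refine ⟨part1, ?_⟩
  intro w c
  obtain ⟨k, _, hk2⟩ := Stmt16Aux.master A u v N H' w
  have h := hk2 ((k:ℤ) - 1 - c)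
  have hz : ∀ i ∈ Finset.range (k+1), i ≠ 0 →
      ((k.choose i : ℤ)) • A.Yc ((k:ℤ) - i - 1 - ((k:ℤ) - 1 - c))
        (A.Yc (N + i - 1) u v) w = 0 := by
    intro i _ hi0
    have hi1 : 1 ≤ (i:ℤ) := by exact_mod_cast Nat.one_le_iff_ne_zero.mpr hi0
    rw [part1 (N + i - 1) (by omega), map_zero, LinearMap.zero_apply, smul_zero]
  rw [Finset.sum_eq_single_of_mem 0 (Finset.mem_range.mpr k.succ_pos) hz] at h
  rw [Nat.choose_zero_right, Nat.cast_one, one_smul, Nat.cast_zero] at h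
  rw [show (k:ℤ) - 0 - 1 - ((k:ℤ) - 1 - c) = c from by ring,
    show N + 0 - 1 = N - 1 from by ring] at h
  rw [h]
  exact finsum_congr fun a => by
    rw [show (k:ℤ) - a - ((k:ℤ) - 1 - c) - 2 = c - 1 - a from by ring]
    rfl
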